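/- Let σ > 0 and let P be a σ-smooth probability measure on [0,1]². Let ε > 0 and let p, p', q, q' ∈ [0,1] satisfy p ≤ p' ≤ p + ε and q − ε ≤ q' ≤ q. Then ∫ Rev(p,q,s,b) dP(s,b) ≤ ∫ Rev(p',q',s,b) dP(s,b) + 2ε + 2ε/σ. -/

import Mathlib

open MeasureTheory

/-- Revenue. -/
noncomputable def Rev (p q s b : ℝ) : ℝ := (q - p) * (if s ≤ p ∧ q ≤ b then 1 else 0)

theorem stmt5 (σ : ℝ) (hσ : 0 < σ) (P : Measure (ℝ × ℝ)) [IsProbabilityMeasure P]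
    (hsupp : P ((Set.Icc (0:ℝ) 1 ×ˢ Set.Icc (0:ℝ) 1)ᶜ) = 0)
    (hsmooth : ∀ A : Set (ℝ × ℝ), MeasurableSet A → P A ≤ volume A / ENNReal.ofReal σ)
    (ε : ℝ) (hε : 0 < ε) (p p' q q' : ℝ)
    (hp : p ∈ Set.Icc (0:ℝ) 1) (hp' : p' ∈ Set.Icc (0:ℝ) 1)
    (hq : q ∈ Set.Icc (0:ℝ) 1) (hq' : q' ∈ Set.Icc (0:ℝ) 1)
    (h1 : p ≤ p') (h2 : p' ≤ p + ε) (h3 : q - ε ≤ q') (h4 : q' ≤ q) :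
    ∫ x, Rev p q x.1 x.2 ∂P ≤ (∫ x, Rev p' q' x.1 x.2 ∂P) + 2 * ε + 2 * ε / σ := by
  set A : Set (ℝ × ℝ) := {x | x.1 ≤ p ∧ q ≤ x.2} with hAdef
  set A' : Set (ℝ × ℝ) := {x | x.1 ≤ p' ∧ q' ≤ x.2} with hA'def
  have hAm : MeasurableSet A := by
    exact (measurableSet_le measurable_fst measurable_const).inter
      (measurableSet_le measurable_const measurable_snd)
  have hA'm : MeasurableSet A' := by
    exact (measurableSet_le measurable_fst measurable_const).inter
      (measurableSet_le measurable_const measurable_snd)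
  set D : Set (ℝ × ℝ) := A' \ A with hDdef
  have hDm : MeasurableSet D := hA'm.diff hAm
  -- measure bound on D
  have hPD : (P D).toReal ≤ 2 * ε / σ := by
    set sq : Set (ℝ × ℝ) := Set.Icc (0:ℝ) 1 ×ˢ Set.Icc (0:ℝ) 1 with hsq
    have h1' : P D ≤ P (D ∩ sq) + P (D \ sq) := measure_le_inter_add_diff P D sq
    have h2' : P (D \ sq) = 0 := by
      refine measure_mono_null ?_ hsupp
      intro x hx; exact hx.2
    have hsub : D ∩ sq ⊆ (Set.Ioc p p' ×ˢ Set.Icc (0:ℝ) 1) ∪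
        (Set.Icc (0:ℝ) 1 ×ˢ Set.Ico q' q) := by
      rintro x ⟨⟨⟨hx1, hx2⟩, hxA⟩, hxsq⟩
      rcases not_and_or.mp hxA with h | h
      · left
        exact ⟨⟨lt_of_not_ge h, hx1⟩, hxsq.2⟩
      · right
        exact ⟨hxsq.1, hx2, lt_of_not_ge h⟩
    have hvol : volume (D ∩ sq) ≤ ENNReal.ofReal (2 * ε) := by
      calc volume (D ∩ sq) ≤ volume (Set.Ioc p p' ×ˢ Set.Icc (0:ℝ) 1) +
            volume (Set.Icc (0:ℝ) 1 ×ˢ Set.Ico q' q) :=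
            le_trans (measure_mono hsub) (measure_union_le _ _)
        _ ≤ ENNReal.ofReal ε + ENNReal.ofReal ε := by
            rw [Measure.volume_eq_prod, Measure.prod_prod, Measure.prod_prod]
            simp only [Real.volume_Ioc, Real.volume_Icc, Real.volume_Ico, sub_zero]
            rw [ENNReal.ofReal_one, mul_one, one_mul]
            exact add_le_add (ENNReal.ofReal_le_ofReal (by linarith))
              (ENNReal.ofReal_le_ofReal (by linarith))
        _ = ENNReal.ofReal (2 * ε) := by
            rw [← ENNReal.ofReal_add hε.le hε.le]; ring_nf
    have hPDsq : P (D ∩ sq) ≤ ENNReal.ofReal (2 * ε / σ) := by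
      calc P (D ∩ sq) ≤ volume (D ∩ sq) / ENNReal.ofReal σ :=
            hsmooth _ (hDm.inter (measurableSet_Icc.prod measurableSet_Icc))
        _ ≤ ENNReal.ofReal (2 * ε) / ENNReal.ofReal σ :=
            ENNReal.div_le_div_right hvol _
        _ = ENNReal.ofReal (2 * ε / σ) := (ENNReal.ofReal_div_of_pos hσ).symm
    have : P D ≤ ENNReal.ofReal (2 * ε / σ) := by
      calc P D ≤ P (D ∩ sq) + P (D \ sq) := h1'
        _ = P (D ∩ sq) := by rw [h2', add_zero]
        _ ≤ _ := hPDsq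
    exact ENNReal.toReal_le_of_le_ofReal (by positivity) this
  -- pointwise inequality
  have key : ∀ x : ℝ × ℝ, Rev p q x.1 x.2 ≤
      Rev p' q' x.1 x.2 + 2 * ε + D.indicator (fun _ => (1:ℝ)) x := by
    intro x
    by_cases hA : x.1 ≤ p ∧ q ≤ x.2
    · have hA' : x.1 ≤ p' ∧ q' ≤ x.2 := ⟨hA.1.trans h1, h4.trans hA.2⟩
      have hxD : x ∉ D := fun hx => hx.2 hA
      rw [Set.indicator_of_notMem hxD]
      simp only [Rev, if_pos hA, if_pos hA', mul_one]
      linarith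
    · by_cases hA' : x.1 ≤ p' ∧ q' ≤ x.2
      · have hxD : x ∈ D := ⟨hA', hA⟩
        rw [Set.indicator_of_mem hxD]
        simp only [Rev, if_neg hA, if_pos hA', mul_zero, mul_one]
        have := hq'.1; have := hp'.2
        linarith
      · have hxD : x ∉ D := fun hx => hA' hx.1
        rw [Set.indicator_of_notMem hxD]
        simp only [Rev, if_neg hA, if_neg hA', mul_zero]
        linarith
  -- integrability
  have hrev : ∀ (a b : ℝ), (fun x : ℝ × ℝ => Rev a b x.1 x.2) =
      Set.indicator {x : ℝ × ℝ | x.1 ≤ a ∧ b ≤ x.2} (fun _ => b - a) := by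
    intro a b
    funext x
    by_cases h : x.1 ≤ a ∧ b ≤ x.2
    · simp [Set.indicator_apply, Rev, h]
    · simp [Set.indicator_apply, Rev, h]
  have hint : ∀ (a b : ℝ), Integrable (fun x : ℝ × ℝ => Rev a b x.1 x.2) P := by
    intro a b
    rw [hrev a b]
    exact (integrable_const _).indicator
      ((measurableSet_le measurable_fst measurable_const).inter
        (measurableSet_le measurable_const measurable_snd))
  have hintD : Integrable (D.indicator (fun _ => (1:ℝ))) P :=
    (integrable_const _).indicator hDm
  have hg1 : Integrable (fun x : ℝ × ℝ => Rev p' q' x.1 x.2 + 2 * ε) P :=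
    (hint p' q').add (integrable_const _)
  have hg2 : Integrable
      (fun x : ℝ × ℝ => Rev p' q' x.1 x.2 + 2 * ε + D.indicator (fun _ => (1:ℝ)) x) P :=
    hg1.add hintD
  have hmono : ∫ x, Rev p q x.1 x.2 ∂P ≤
      ∫ x, (Rev p' q' x.1 x.2 + 2 * ε + D.indicator (fun _ => (1:ℝ)) x) ∂P :=
    integral_mono (hint p q) hg2 key
  have heq : ∫ x, (Rev p' q' x.1 x.2 + 2 * ε + D.indicator (fun _ => (1:ℝ)) x) ∂P =
      (∫ x, Rev p' q' x.1 x.2 ∂P) + 2 * ε + (P D).toReal := by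
    rw [integral_add hg1 hintD, integral_add (hint p' q') (integrable_const _)]
    rw [integral_const, integral_indicator_const _ hDm]
    simp [measure_univ, Measure.real]
  rw [heq] at hmono
  linarith
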